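/- There do not exist complex numbers β, γ, f₁, f₂, f₃, g₁, g₂, g₃ such that the 3×3 matrix [[γ + f₁g₁, β + f₁g₂, 1 + f₁g₃],[β + f₂g₁, 1 + f₂g₂, f₂g₃],[1 + f₃g₁, f₃g₂, f₃g₃]] has rank at most 1. -/

import Mathlib

open Matrix

lemma rank_le_one_outer {m n : Type*} [Fintype m] [Fintype n] [DecidableEq n]
    (A : Matrix m n ℂ) (h : A.rank ≤ 1) :
    ∃ v : m → ℂ, ∃ w : n → ℂ, ∀ i j, A i j = v i * w j := by
  rw [Matrix.rank] at h
  obtain ⟨⟨v, hv⟩, hv'⟩ := finrank_le_one_iff.mp h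
  have hcol : ∀ j : n, ∃ c : ℂ, ∀ i, A i j = v i * c := by
    intro j
    have hmem : A.mulVec (Pi.single j 1) ∈ LinearMap.range A.mulVecLin :=
      ⟨Pi.single j 1, rfl⟩
    obtain ⟨c, hc⟩ := hv' ⟨_, hmem⟩
    have hc' : c • v = A.mulVec (Pi.single j 1) := congrArg Subtype.val hc
    refine ⟨c, fun i => ?_⟩
    have := congrFun hc' i
    simp only [Pi.smul_apply, smul_eq_mul, mulVec_single, mul_one, MulOpposite.op_one, one_smul, Matrix.col_apply] at this
    rw [← this, mul_comm]
  choose w hw using hcol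
  exact ⟨v, w, fun i j => hw j i⟩

/-- There are no complex numbers `β, γ, f₁, f₂, f₃, g₁, g₂, g₃` such that
`[[γ,β,1],[β,1,0],[1,0,0]] + (fᵢgⱼ)` has rank at most 1. -/
theorem no_rank_one_perturbation :
    ¬ ∃ β γ f₁ f₂ f₃ g₁ g₂ g₃ : ℂ,
      (!![γ + f₁ * g₁, β + f₁ * g₂, 1 + f₁ * g₃;
          β + f₂ * g₁, 1 + f₂ * g₂, f₂ * g₃;
          1 + f₃ * g₁, f₃ * g₂, f₃ * g₃] : Matrix (Fin 3) (Fin 3) ℂ).rank ≤ 1 := by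
  rintro ⟨β, γ, f₁, f₂, f₃, g₁, g₂, g₃, h⟩
  obtain ⟨v, w, hvw⟩ := rank_le_one_outer _ h
  have e01 : β + f₁ * g₂ = v 0 * w 1 := by simpa using hvw 0 1
  have e02 : 1 + f₁ * g₃ = v 0 * w 2 := by simpa using hvw 0 2
  have e10 : β + f₂ * g₁ = v 1 * w 0 := by simpa using hvw 1 0
  have e11 : 1 + f₂ * g₂ = v 1 * w 1 := by simpa using hvw 1 1
  have e12 : f₂ * g₃ = v 1 * w 2 := by simpa using hvw 1 2
  have e20 : 1 + f₃ * g₁ = v 2 * w 0 := by simpa using hvw 2 0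
  have e21 : f₃ * g₂ = v 2 * w 1 := by simpa using hvw 2 1
  have e22 : f₃ * g₃ = v 2 * w 2 := by simpa using hvw 2 2
  -- minor (rows 1,2; cols 1,2): f₃g₃ = 0
  have h22 : f₃ * g₃ = 0 := by
    linear_combination (f₃ * g₃) * e11 + (v 1 * w 1) * e22 - (f₃ * g₂) * e12 - (v 1 * w 2) * e21
  have e00 : γ + f₁ * g₁ = v 0 * w 0 := by simpa using hvw 0 0
  have h12 : f₂ * g₃ = 0 := by
    linear_combination β * h22 - ((f₃ * g₃) * e10 + (v 1 * w 0) * e22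
      - (1 + f₃ * g₁) * e12 - (v 1 * w 2) * e20)
  have h21 : f₃ * g₂ = 0 := by
    linear_combination β * h22 - ((f₃ * g₃) * e01 + (v 0 * w 1) * e22
      - (f₃ * g₂) * e02 - (v 0 * w 2) * e21)
  have hA : 1 + f₁ * g₃ + f₃ * g₁ = 0 := by
    linear_combination γ * h22 + (1 + f₃ * g₁) * e02 + (v 0 * w 2) * e20
      - (f₃ * g₃) * e00 - (v 0 * w 0) * e22
  have hB : 1 + f₂ * g₂ + f₃ * g₁ = 0 := by
    linear_combination β * h21 + (1 + f₃ * g₁) * e11 + (v 1 * w 1) * e20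
      - (f₃ * g₂) * e10 - (v 1 * w 0) * e21
  have hC : 1 + f₁ * g₃ + f₂ * g₂ = 0 := by
    linear_combination β * h12 + (1 + f₂ * g₂) * e02 + (v 0 * w 2) * e11
      - (f₂ * g₃) * e01 - (v 0 * w 1) * e12
  have hf : f₁ * g₃ = -(1/2) := by linear_combination (hA + hC - hB) / 2
  have hg : f₃ * g₁ = -(1/2) := by linear_combination (hA + hB - hC) / 2
  rcases mul_eq_zero.mp h22 with h0 | h0
  · rw [h0, zero_mul] at hg
    exact absurd hg (by norm_num)
  · rw [h0, mul_zero] at hf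
    exact absurd hf (by norm_num)
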